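/- Let m ≥ 1, let O ⊆ ℝ^m be a nonempty open convex set, let ω : O → ℝ be convex and differentiable, let α > 0 satisfy ω(x) − ω(y) − ⟨∇ω(y), x − y⟩ ≥ (α/2)‖x − y‖² for all x, y ∈ X, where X ⊆ O is a nonempty compact convex set, and let Θ ∈ ℝ satisfy D_ω(u,v) ≤ Θ for all u, v ∈ X. Let (x_k)_{k≥1} be a sequence in X, (E_k)_{k≥1} a sequence in ℝ^m, and (t_k)_{k≥1} a sequence of positive reals such that for every k ≥ 1 the point x_{k+1} minimizes u ↦ ⟨t_k E_k − ∇ω(x_k), u⟩ + ω(u) over X. Then for all positive integers i ≤ j and every u ∈ X: Σ_{k=i}^{j} t_k ⟨E_k, x_k − u⟩ ≤ Θ + (1/(2α)) Σ_{k=i}^{j} t_k² ‖E_k‖². -/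

import Mathlib

open scoped RealInnerProductSpace

/-- The Bregman distance associated to a differentiable function `ω`. -/
noncomputable def bregman {m : ℕ} (ω : EuclideanSpace ℝ (Fin m) → ℝ)
    (u v : EuclideanSpace ℝ (Fin m)) : ℝ :=
  ω u - ω v - ⟪gradient ω v, u - v⟫

theorem comirror_key_lemma {m : ℕ} (hm : 1 ≤ m)
    (O : Set (EuclideanSpace ℝ (Fin m))) (hOne : O.Nonempty) (hOopen : IsOpen O)
    (hOconv : Convex ℝ O)
    (ω : EuclideanSpace ℝ (Fin m) → ℝ) (hωconv : ConvexOn ℝ O ω)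
    (hωdiff : ∀ x ∈ O, DifferentiableAt ℝ ω x)
    (X : Set (EuclideanSpace ℝ (Fin m))) (hXne : X.Nonempty) (hXcpt : IsCompact X)
    (hXconv : Convex ℝ X) (hXO : X ⊆ O)
    (α : ℝ) (hα : 0 < α)
    (hstrong : ∀ x ∈ X, ∀ y ∈ X,
      ω x - ω y - ⟪gradient ω y, x - y⟫ ≥ α / 2 * ‖x - y‖ ^ 2)
    (Θ : ℝ) (hΘ : ∀ u ∈ X, ∀ v ∈ X, bregman ω u v ≤ Θ)
    (x : ℕ → EuclideanSpace ℝ (Fin m)) (hx : ∀ k, 1 ≤ k → x k ∈ X)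
    (E : ℕ → EuclideanSpace ℝ (Fin m))
    (t : ℕ → ℝ) (ht : ∀ k, 1 ≤ k → 0 < t k)
    (hmin : ∀ k, 1 ≤ k → ∀ u ∈ X,
      ⟪t k • E k - gradient ω (x k), x (k + 1)⟫ + ω (x (k + 1)) ≤
        ⟪t k • E k - gradient ω (x k), u⟫ + ω u) :
    ∀ i j : ℕ, 1 ≤ i → i ≤ j → ∀ u ∈ X,
      ∑ k ∈ Finset.Icc i j, t k * ⟪E k, x k - u⟫ ≤
        Θ + 1 / (2 * α) * ∑ k ∈ Finset.Icc i j, t k ^ 2 * ‖E k‖ ^ 2 := by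
  intro i j hi hij u hu
  -- the per-step key inequality
  have key : ∀ k, 1 ≤ k → t k * ⟪E k, x k - u⟫ ≤
      bregman ω u (x k) - bregman ω u (x (k + 1)) + t k ^ 2 * ‖E k‖ ^ 2 / (2 * α) := by
    intro k hk
    have hxk : x k ∈ X := hx k hk
    have hp : x (k + 1) ∈ X := hx (k + 1) (by omega)
    set p := x (k + 1) with hpdef
    set a := t k • E k - gradient ω (x k) with ha
    have hdiff : DifferentiableAt ℝ ω p := hωdiff p (hXO hp)
    have hfderiv : HasFDerivAt ω
        (InnerProductSpace.toDual ℝ _ (gradient ω p)) p :=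
      hdiff.hasGradientAt.hasFDerivAt
    have hf : HasFDerivAt (fun v => ⟪a, v⟫ + ω v)
        ((innerSL ℝ a) + InnerProductSpace.toDual ℝ _ (gradient ω p)) p :=
      ((innerSL ℝ a).hasFDerivAt).add hfderiv
    have hminOn : IsMinOn (fun v => ⟪a, v⟫ + ω v) X p := by
      rw [isMinOn_iff]
      intro v hv
      exact hmin k hk v hv
    have hcone : u - p ∈ posTangentConeAt X p :=
      sub_mem_posTangentConeAt_of_segment_subset (hXconv.segment_subset hp hu)
    have hfo : (0 : ℝ) ≤ ⟪a, u - p⟫ + ⟪gradient ω p, u - p⟫ := by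
      have h := hminOn.localize.hasFDerivWithinAt_nonneg hf.hasFDerivWithinAt hcone
      simpa [InnerProductSpace.toDual_apply_apply] using h
    have hsc : α / 2 * ‖p - x k‖ ^ 2 ≤ ω p - ω (x k) - ⟪gradient ω (x k), p - x k⟫ :=
      hstrong p hp (x k) hxk
    have hc : t k * ⟪E k, x k - p⟫ ≤ t k * (‖E k‖ * ‖x k - p‖) :=
      mul_le_mul_of_nonneg_left (real_inner_le_norm _ _) (ht k hk).le
    have hyoung : t k * (‖E k‖ * ‖x k - p‖) ≤
        α / 2 * ‖x k - p‖ ^ 2 + t k ^ 2 * ‖E k‖ ^ 2 / (2 * α) := by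
      have hid : α / 2 * ‖x k - p‖ ^ 2 + t k ^ 2 * ‖E k‖ ^ 2 / (2 * α)
          - t k * (‖E k‖ * ‖x k - p‖)
          = (α * ‖x k - p‖ - t k * ‖E k‖) ^ 2 / (2 * α) := by
        field_simp
        ring
      have hnn : (0:ℝ) ≤ (α * ‖x k - p‖ - t k * ‖E k‖) ^ 2 / (2 * α) :=
        div_nonneg (sq_nonneg _) (by linarith)
      linarith
    have hrev : ‖p - x k‖ = ‖x k - p‖ := norm_sub_rev _ _
    rw [hrev] at hsc
    simp only [bregman]
    simp only [ha, inner_sub_left, inner_sub_right, real_inner_smul_left] at hfo hsc hc ⊢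
    nlinarith [hfo, hsc, hc, hyoung]
  -- telescoping sum
  have tel : ∀ j, i ≤ j → ∑ k ∈ Finset.Icc i j, t k * ⟪E k, x k - u⟫ ≤
      bregman ω u (x i) - bregman ω u (x (j + 1)) +
        ∑ k ∈ Finset.Icc i j, t k ^ 2 * ‖E k‖ ^ 2 / (2 * α) := by
    intro j hj
    induction j, hj using Nat.le_induction with
    | base =>
      simp only [Finset.Icc_self, Finset.sum_singleton]
      exact key i hi
    | succ n hn ih =>
      rw [Finset.sum_Icc_succ_top (by omega), Finset.sum_Icc_succ_top (by omega : i ≤ n + 1)]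
      have := key (n + 1) (by omega)
      linarith
  have h1 : bregman ω u (x i) ≤ Θ := hΘ u hu (x i) (hx i hi)
  have h2 : 0 ≤ bregman ω u (x (j + 1)) := by
    have hs := hstrong u hu (x (j + 1)) (hx (j + 1) (by omega))
    have : (0:ℝ) ≤ α / 2 * ‖u - x (j + 1)‖ ^ 2 := by positivity
    simp only [bregman]
    linarith
  have h3 : ∑ k ∈ Finset.Icc i j, t k ^ 2 * ‖E k‖ ^ 2 / (2 * α) =
      1 / (2 * α) * ∑ k ∈ Finset.Icc i j, t k ^ 2 * ‖E k‖ ^ 2 := by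
    rw [Finset.mul_sum]
    refine Finset.sum_congr rfl fun k _ => by ring
  have := tel j hij
  rw [h3] at this
  linarith
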